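/- Let Σ̂ be an n×n real symmetric positive definite matrix, λ > 0, and X an n×n real symmetric matrix with Σ̂⁻¹ + λ⁻¹X ≻ 0; set R := (Σ̂⁻¹ + λ⁻¹X)⁻¹. Define the quadratic form q(δλ, δX) := λ⁻¹·tr(R·δX·R·δX) − 2λ⁻²·δλ·tr(R·δX·R·X) + λ⁻³·δλ²·tr(R·X·R·X) for δλ ∈ ℝ and δX real symmetric. Then q(δλ, δX) ≥ 0 for all (δλ, δX), and q(δλ, δX) = 0 if and only if λ·δX = δλ·X; that is, the Hessian of F at (λ, X) is positive semidefinite with kernel exactly the one-dimensional span of (λ, X). -/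

import Mathlib

open Matrix
open scoped MatrixOrder

/-- The quadratic form given by the second variation of `F` at `(λ, X)`, with
`R := (Ŝ⁻¹ + λ⁻¹X)⁻¹`. -/
noncomputable def hessForm {n : ℕ} (S : Matrix (Fin n) (Fin n) ℝ)
    (l : ℝ) (X : Matrix (Fin n) (Fin n) ℝ)
    (dl : ℝ) (dX : Matrix (Fin n) (Fin n) ℝ) : ℝ :=
  l⁻¹ * ((S⁻¹ + l⁻¹ • X)⁻¹ * dX * (S⁻¹ + l⁻¹ • X)⁻¹ * dX).trace
    - 2 * l⁻¹ ^ 2 * dl * ((S⁻¹ + l⁻¹ • X)⁻¹ * dX * (S⁻¹ + l⁻¹ • X)⁻¹ * X).trace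
    + l⁻¹ ^ 3 * dl ^ 2 * ((S⁻¹ + l⁻¹ • X)⁻¹ * X * (S⁻¹ + l⁻¹ • X)⁻¹ * X).trace

private lemma trace_sq_aux {n : ℕ} {N : Matrix (Fin n) (Fin n) ℝ} (h : Nᵀ = N) :
    0 ≤ (N * N).trace ∧ ((N * N).trace = 0 ↔ N = 0) := by
  have key : (N * N).trace = ∑ i, ∑ j, (N i j) ^ 2 := by
    simp only [Matrix.trace, Matrix.diag, Matrix.mul_apply]
    refine Finset.sum_congr rfl fun i _ => Finset.sum_congr rfl fun j _ => ?_
    have : N j i = N i j := by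
      have h2 := congrFun (congrFun h j) i
      simpa [Matrix.transpose_apply] using h2.symm
    rw [this]; ring
  rw [key]
  constructor
  · positivity
  · constructor
    · intro h0
      ext i j
      have h1 : ∀ i ∈ Finset.univ, (0:ℝ) ≤ ∑ j, (N i j) ^ 2 := fun i _ => by positivity
      have h2 := (Finset.sum_eq_zero_iff_of_nonneg h1).mp h0 i (Finset.mem_univ i)
      have h3 : ∀ j ∈ Finset.univ, (0:ℝ) ≤ (N i j) ^ 2 := fun j _ => sq_nonneg _
      have h4 := (Finset.sum_eq_zero_iff_of_nonneg h3).mp h2 j (Finset.mem_univ j)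
      simpa using pow_eq_zero_iff (n := 2) (by norm_num) |>.mp h4
    · intro h0; simp [h0]

/-- The Hessian quadratic form `q` of `F` at `(λ, X)` is positive
semidefinite, and `q(δλ, δX) = 0` iff `λ·δX = δλ·X`: its kernel is exactly the span of
`(λ, X)`. -/
theorem stmt14 {n : ℕ} (S : Matrix (Fin n) (Fin n) ℝ) (hS : S.PosDef)
    (l : ℝ) (hl : 0 < l) (X : Matrix (Fin n) (Fin n) ℝ) (hX : X.IsSymm)
    (hpd : (S⁻¹ + l⁻¹ • X).PosDef)
    (dl : ℝ) (dX : Matrix (Fin n) (Fin n) ℝ) (hdX : dX.IsSymm) :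
    0 ≤ hessForm S l X dl dX ∧
    (hessForm S l X dl dX = 0 ↔ l • dX = dl • X) := by
  set R : Matrix (Fin n) (Fin n) ℝ := (S⁻¹ + l⁻¹ • X)⁻¹ with hRdef
  have hR : R.PosDef := hpd.inv
  set B : Matrix (Fin n) (Fin n) ℝ := CFC.sqrt R with hBdef
  have hB2 : B * B = R := CFC.sqrt_mul_sqrt_self R hR.posSemidef.nonneg
  have hBT : Bᵀ = B := by
    have : B.IsHermitian := (CFC.sqrt_nonneg R).posSemidef.1
    simpa [Matrix.IsHermitian, Matrix.conjTranspose_eq_transpose_of_trivial] using this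
  set M : Matrix (Fin n) (Fin n) ℝ := l • dX - dl • X with hMdef
  have hMT : Mᵀ = M := by
    simp [hMdef, Matrix.transpose_smul, Matrix.IsSymm.eq hX, Matrix.IsSymm.eq hdX]
  set N : Matrix (Fin n) (Fin n) ℝ := B * M * B with hNdef
  have hNT : Nᵀ = N := by
    simp [hNdef, Matrix.transpose_mul, hBT, hMT, Matrix.mul_assoc]
  -- trace identity: tr(N*N) = tr(R*M*R*M)
  have htrN : (N * N).trace = (R * M * R * M).trace := by
    have e1 : N * N = B * (M * R * M * B) := by
      simp only [hNdef, ← hB2]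
      noncomm_ring
    rw [e1, Matrix.trace_mul_comm]
    have e2 : M * R * M * B * B = M * (R * M * R) := by
      rw [← hB2]; noncomm_ring
    rw [e2, Matrix.trace_mul_comm]
  -- symmetric cross term
  have hcross : (R * X * R * dX).trace = (R * dX * R * X).trace := by
    have := Matrix.trace_mul_comm (R * X) (R * dX)
    simpa [Matrix.mul_assoc] using this
  -- main algebraic identity
  have hmain : hessForm S l X dl dX = l⁻¹ ^ 3 * (N * N).trace := by
    rw [htrN]
    have hexp : R * M * R * M
        = (l * l) • (R * dX * R * dX) - (l * dl) • (R * dX * R * X)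
          - (dl * l) • (R * X * R * dX) + (dl * dl) • (R * X * R * X) := by
      simp only [hMdef]
      simp only [Matrix.mul_sub, Matrix.sub_mul, Matrix.mul_smul, Matrix.smul_mul,
        smul_sub, smul_smul]
      module
    rw [hexp]
    simp only [Matrix.trace_add, Matrix.trace_sub, Matrix.trace_smul, smul_eq_mul, hcross]
    have hl0 : l ≠ 0 := ne_of_gt hl
    simp only [hessForm, ← hRdef]
    field_simp
    ring
  have hNpos := trace_sq_aux hNT
  have hl3 : 0 < l⁻¹ ^ 3 := by positivity
  constructor
  · rw [hmain]; exact mul_nonneg hl3.le hNpos.1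
  · rw [hmain]
    have hBu : IsUnit B.det := by
      have hRu : IsUnit R.det := hR.isUnit.map (Matrix.detMonoidHom)
      have : B.det * B.det = R.det := by rw [← Matrix.det_mul, hB2]
      exact isUnit_of_mul_isUnit_left (this ▸ hRu)
    constructor
    · intro h0
      have ht0 : (N * N).trace = 0 := by
        have := mul_eq_zero.mp h0
        rcases this with h | h
        · exact absurd h (ne_of_gt hl3)
        · exact h
      have hN0 : N = 0 := hNpos.2.mp ht0
      have hM0 : M = 0 := by
        have h1 : B * M * B = 0 := hN0
        have h2 : B⁻¹ * (B * M * B) * B⁻¹ = 0 := by rw [h1]; simp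
        rwa [← Matrix.mul_assoc, Matrix.nonsing_inv_mul_cancel_left _ _ hBu,
          Matrix.mul_assoc, Matrix.mul_nonsing_inv _ hBu, Matrix.mul_one] at h2
      have := sub_eq_zero.mp (hMdef ▸ hM0)
      exact this
    · intro h0
      have hM0 : M = 0 := by rw [hMdef, h0, sub_self]
      simp [hNdef, hM0]
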